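/- Let a, b : Primes → ℝ be functions on the prime numbers with |a_p| ≤ 2 and |b_p| ≤ 2 for every prime p. Suppose that, as s → 1⁺, Σ_p a_p p^{−s} = O(1), Σ_p b_p p^{−s} = O(1), Σ_p (a_p² − 1) p^{−s} = O(1), Σ_p (b_p² − 1) p^{−s} = O(1), and Σ_p a_p b_p p^{−s} = O(1). Then liminf_{s→1⁺} (Σ_{p : a_p < b_p} p^{−s}) / (Σ_p p^{−s}) ≥ 1/16; that is, the set {p : a_p < b_p} has analytic density at least 1/16. -/
import Mathlib


open Filter Topology Asymptotics

private lemma prime_cast_pos (p : Nat.Primes) : (0 : ℝ) < ((p : ℕ) : ℝ) := by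
  exact_mod_cast p.2.pos

private lemma summable_P {s : ℝ} (hs : 1 < s) :
    Summable (fun p : Nat.Primes => ((p : ℕ) : ℝ) ^ (-s)) :=
  Nat.Primes.summable_rpow.mpr (by linarith)

private lemma summable_aux {s : ℝ} (hs : 1 < s) {c : Nat.Primes → ℝ} {M : ℝ}
    (hc : ∀ p, |c p| ≤ M) :
    Summable (fun p : Nat.Primes => c p * ((p : ℕ) : ℝ) ^ (-s)) := by
  refine Summable.of_abs ?_
  refine Summable.of_nonneg_of_le (fun p => abs_nonneg _) (fun p => ?_)
    ((summable_P hs).mul_left M)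
  rw [abs_mul, abs_of_nonneg (Real.rpow_nonneg (prime_cast_pos p).le _)]
  exact mul_le_mul_of_nonneg_right (hc p) (Real.rpow_nonneg (prime_cast_pos p).le _)

/-- The sum `Σ_p p^{-s}` tends to infinity as `s → 1⁺`. -/
private lemma tendsto_S_atTop :
    Tendsto (fun s : ℝ => ∑' p : Nat.Primes, ((p : ℕ) : ℝ) ^ (-s)) (𝓝[>] (1 : ℝ)) atTop := by
  rw [tendsto_atTop]
  intro C
  -- find a finite set of primes whose reciprocal sum exceeds C
  have hns : ¬ Summable (fun p : Nat.Primes => ((p : ℕ) : ℝ) ^ (-(1 : ℝ))) := by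
    rw [Nat.Primes.summable_rpow]; norm_num
  have hex : ∃ F : Finset Nat.Primes, C < ∑ p ∈ F, ((p : ℕ) : ℝ) ^ (-(1 : ℝ)) := by
    by_contra h
    push_neg at h
    exact hns (summable_of_sum_le (fun p => Real.rpow_nonneg (prime_cast_pos p).le _) h)
  obtain ⟨F, hF⟩ := hex
  have hcont : Tendsto (fun s : ℝ => ∑ p ∈ F, ((p : ℕ) : ℝ) ^ (-s)) (𝓝[>] (1 : ℝ))
      (𝓝 (∑ p ∈ F, ((p : ℕ) : ℝ) ^ (-(1 : ℝ)))) := by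
    refine Tendsto.mono_left ?_ nhdsWithin_le_nhds
    refine tendsto_finset_sum F (fun p _ => ?_)
    have h1 : ContinuousAt (fun x : ℝ => ((p : ℕ) : ℝ) ^ x) (-(1 : ℝ)) :=
      Real.continuousAt_const_rpow (prime_cast_pos p).ne'
    have h2 : ContinuousAt (fun s : ℝ => -s) (1 : ℝ) := continuous_neg.continuousAt
    exact (h1.comp h2 : ContinuousAt (fun s : ℝ => ((p : ℕ) : ℝ) ^ (-s)) 1)
  have hev : ∀ᶠ s in 𝓝[>] (1 : ℝ), C < ∑ p ∈ F, ((p : ℕ) : ℝ) ^ (-s) :=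
    hcont.eventually_const_lt hF
  filter_upwards [hev, self_mem_nhdsWithin] with s hsC hs1
  have hs1' : (1 : ℝ) < s := hs1
  calc C ≤ ∑ p ∈ F, ((p : ℕ) : ℝ) ^ (-s) := hsC.le
    _ ≤ ∑' p : Nat.Primes, ((p : ℕ) : ℝ) ^ (-s) :=
      Summable.sum_le_tsum F (fun p _ => Real.rpow_nonneg (prime_cast_pos p).le _) (summable_P hs1')

/-- Theorem 1 of the paper, axiomatized form: If `|a p| ≤ 2`, `|b p| ≤ 2`
for all primes `p`, and as `s → 1⁺` the sums `Σ_p a_p p^{-s}`, `Σ_p b_p p^{-s}`,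
`Σ_p (a_p² - 1) p^{-s}`, `Σ_p (b_p² - 1) p^{-s}` and `Σ_p a_p b_p p^{-s}` are all `O(1)`,
then the set `{p : a_p < b_p}` has analytic density at least `1/16`. -/
theorem statement5 (a b : Nat.Primes → ℝ)
    (ha : ∀ p : Nat.Primes, |a p| ≤ 2) (hb : ∀ p : Nat.Primes, |b p| ≤ 2)
    (h1 : (fun s : ℝ => ∑' p : Nat.Primes, a p * ((p : ℕ) : ℝ) ^ (-s))
      =O[𝓝[>] (1 : ℝ)] (fun _ => (1 : ℝ)))
    (h2 : (fun s : ℝ => ∑' p : Nat.Primes, b p * ((p : ℕ) : ℝ) ^ (-s))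
      =O[𝓝[>] (1 : ℝ)] (fun _ => (1 : ℝ)))
    (h3 : (fun s : ℝ => ∑' p : Nat.Primes, (a p ^ 2 - 1) * ((p : ℕ) : ℝ) ^ (-s))
      =O[𝓝[>] (1 : ℝ)] (fun _ => (1 : ℝ)))
    (h4 : (fun s : ℝ => ∑' p : Nat.Primes, (b p ^ 2 - 1) * ((p : ℕ) : ℝ) ^ (-s))
      =O[𝓝[>] (1 : ℝ)] (fun _ => (1 : ℝ)))
    (h5 : (fun s : ℝ => ∑' p : Nat.Primes, a p * b p * ((p : ℕ) : ℝ) ^ (-s))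
      =O[𝓝[>] (1 : ℝ)] (fun _ => (1 : ℝ))) :
    (1 : ℝ) / 16 ≤ liminf (fun s : ℝ =>
      (∑' p : {p : Nat.Primes // a p < b p}, ((p.1 : ℕ) : ℝ) ^ (-s)) /
        ∑' p : Nat.Primes, ((p : ℕ) : ℝ) ^ (-s)) (𝓝[>] (1 : ℝ)) := by
  set P : ℝ → Nat.Primes → ℝ := fun s p => ((p : ℕ) : ℝ) ^ (-s) with hP
  set S : ℝ → ℝ := fun s => ∑' p : Nat.Primes, P s p with hS
  set T : ℝ → ℝ := fun s => ∑' p : {p : Nat.Primes // a p < b p}, P s p.1 with hT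
  have hPnn : ∀ s (p : Nat.Primes), 0 ≤ P s p :=
    fun s p => Real.rpow_nonneg (prime_cast_pos p).le _
  -- extract the O(1) constants
  obtain ⟨C1, hC1⟩ := h1.bound
  obtain ⟨C2, hC2⟩ := h2.bound
  obtain ⟨C3, hC3⟩ := h3.bound
  obtain ⟨C4, hC4⟩ := h4.bound
  obtain ⟨C5, hC5⟩ := h5.bound
  set K : ℝ := ((C3 + C4 + 2 * C5) / 4 + C1 + C2) / 8 with hK
  -- the key eventual inequality : S s / 16 - K ≤ T s
  have key : ∀ᶠ s in 𝓝[>] (1 : ℝ), S s / 16 - K ≤ T s := by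
    filter_upwards [hC1, hC2, hC3, hC4, hC5, self_mem_nhdsWithin]
      with s b1 b2 b3 b4 b5 hs1
    have hs : (1 : ℝ) < s := hs1
    simp only [Real.norm_eq_abs, abs_one, mul_one] at b1 b2 b3 b4 b5
    have b1' : |∑' p : Nat.Primes, a p * P s p| ≤ C1 := b1
    have b2' : |∑' p : Nat.Primes, b p * P s p| ≤ C2 := b2
    have b3' : |∑' p : Nat.Primes, (a p ^ 2 - 1) * P s p| ≤ C3 := b3
    have b4' : |∑' p : Nat.Primes, (b p ^ 2 - 1) * P s p| ≤ C4 := b4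
    have b5' : |∑' p : Nat.Primes, a p * b p * P s p| ≤ C5 := b5
    -- summability facts
    have habs : ∀ p, |b p - a p| ≤ 4 := fun p => by
      have := abs_sub (b p) (a p); have := ha p; have := hb p
      calc |b p - a p| ≤ |b p| + |a p| := abs_sub _ _
        _ ≤ 4 := by linarith
    have sumP : Summable (P s) := summable_P hs
    have sum_a : Summable (fun p => a p * P s p) := summable_aux hs ha
    have sum_b : Summable (fun p => b p * P s p) := summable_aux hs hb
    have sum_a2 : Summable (fun p => (a p ^ 2 - 1) * P s p) := by
      refine summable_aux hs (c := fun p => a p ^ 2 - 1) (M := 5) (fun p => ?_)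
      have h := abs_le.mp (ha p)
      rw [abs_le]
      refine ⟨?_, ?_⟩
      · show (-5 : ℝ) ≤ a p ^ 2 - 1; nlinarith [sq_nonneg (a p)]
      · show a p ^ 2 - 1 ≤ 5; nlinarith [h.1, h.2]
    have sum_b2 : Summable (fun p => (b p ^ 2 - 1) * P s p) := by
      refine summable_aux hs (c := fun p => b p ^ 2 - 1) (M := 5) (fun p => ?_)
      have h := abs_le.mp (hb p)
      rw [abs_le]
      refine ⟨?_, ?_⟩
      · show (-5 : ℝ) ≤ b p ^ 2 - 1; nlinarith [sq_nonneg (b p)]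
      · show b p ^ 2 - 1 ≤ 5; nlinarith [h.1, h.2]
    have sum_ab : Summable (fun p => a p * b p * P s p) := by
      refine summable_aux hs (c := fun p => a p * b p) (M := 4) (fun p => ?_)
      rw [abs_mul]
      calc |a p| * |b p| ≤ 2 * 2 :=
        mul_le_mul (ha p) (hb p) (abs_nonneg _) (by norm_num)
        _ = 4 := by norm_num
    have sum_d2 : Summable (fun p => (b p - a p) ^ 2 * P s p) := by
      refine summable_aux hs (c := fun p => (b p - a p) ^ 2) (M := 16) (fun p => ?_)
      rw [abs_of_nonneg (sq_nonneg _)]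
      show (b p - a p) ^ 2 ≤ 16
      have := habs p
      nlinarith [abs_nonneg (b p - a p), sq_abs (b p - a p)]
    have sum_absd : Summable (fun p => |b p - a p| * P s p) := by
      refine summable_aux hs (c := fun p => |b p - a p|) (M := 4) (fun p => ?_)
      rw [abs_abs]; exact habs p
    have sum_g : Summable (fun p => (|b p - a p| + (b p - a p)) * P s p) := by
      refine summable_aux hs (c := fun p => |b p - a p| + (b p - a p)) (M := 8)
        (fun p => ?_)
      have h1 := habs p
      have h2 := abs_le.mp h1
      rw [abs_le]
      refine ⟨?_, ?_⟩
      · show (-8 : ℝ) ≤ |b p - a p| + (b p - a p)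
        linarith [abs_nonneg (b p - a p)]
      · show |b p - a p| + (b p - a p) ≤ 8
        linarith
    -- Step A: tsum identity for Σ (b-a)² p^{-s}
    have eA : ∑' p : Nat.Primes, (b p - a p) ^ 2 * P s p =
        (∑' p : Nat.Primes, (a p ^ 2 - 1) * P s p +
          ∑' p : Nat.Primes, (b p ^ 2 - 1) * P s p) +
        (2 * S s - 2 * ∑' p : Nat.Primes, a p * b p * P s p) := by
      have hfun : (fun p : Nat.Primes => (b p - a p) ^ 2 * P s p) =
          fun p => ((a p ^ 2 - 1) * P s p + (b p ^ 2 - 1) * P s p) +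
            (2 * P s p - 2 * (a p * b p * P s p)) := funext fun p => by ring
      rw [hfun, Summable.tsum_add (sum_a2.add sum_b2) ((sumP.mul_left 2).sub (sum_ab.mul_left 2)),
        Summable.tsum_add sum_a2 sum_b2, Summable.tsum_sub (sumP.mul_left 2) (sum_ab.mul_left 2),
        tsum_mul_left, tsum_mul_left]
    -- Step B: Σ (b-a)² p^{-s} ≤ 4 Σ |b-a| p^{-s}
    have eB : ∑' p : Nat.Primes, (b p - a p) ^ 2 * P s p ≤
        4 * ∑' p : Nat.Primes, |b p - a p| * P s p := by
      rw [← tsum_mul_left]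
      refine Summable.tsum_le_tsum (fun p => ?_) sum_d2 (sum_absd.mul_left 4)
      have h1 := habs p
      have h2 := hPnn s p
      rw [← mul_assoc]
      refine mul_le_mul_of_nonneg_right ?_ h2
      nlinarith [sq_abs (b p - a p), abs_nonneg (b p - a p)]
    -- Step C: Σ (|d|+d) p^{-s} = Σ |d| p^{-s} + (Σ b p^{-s} - Σ a p^{-s})
    have eC : ∑' p : Nat.Primes, (|b p - a p| + (b p - a p)) * P s p =
        ∑' p : Nat.Primes, |b p - a p| * P s p +
          (∑' p : Nat.Primes, b p * P s p - ∑' p : Nat.Primes, a p * P s p) := by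
      have hfun : (fun p : Nat.Primes => (|b p - a p| + (b p - a p)) * P s p) =
          fun p => |b p - a p| * P s p + (b p * P s p - a p * P s p) :=
        funext fun p => by ring
      rw [hfun, Summable.tsum_add sum_absd (sum_b.sub sum_a), Summable.tsum_sub sum_b sum_a]
    -- Step D: Σ (|d|+d) p^{-s} ≤ 8 T s
    have eD : ∑' p : Nat.Primes, (|b p - a p| + (b p - a p)) * P s p ≤ 8 * T s := by
      have hsupp : Function.support (fun p : Nat.Primes =>
          (|b p - a p| + (b p - a p)) * P s p) ⊆ {p : Nat.Primes | a p < b p} := by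
        intro p hp
        simp only [Function.mem_support] at hp
        by_contra h
        simp only [Set.mem_setOf_eq, not_lt] at h
        apply hp
        have : |b p - a p| = -(b p - a p) := abs_of_nonpos (by linarith)
        rw [this]; ring
      have heq : ∑' p : {p : Nat.Primes | a p < b p},
          (|b p.1 - a p.1| + (b p.1 - a p.1)) * P s p.1 =
          ∑' p : Nat.Primes, (|b p - a p| + (b p - a p)) * P s p :=
        tsum_subtype_eq_of_support_subset hsupp
      rw [← heq]
      have hTle : ∑' p : {p : Nat.Primes | a p < b p},
          (|b p.1 - a p.1| + (b p.1 - a p.1)) * P s p.1 ≤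
          ∑' p : {p : Nat.Primes | a p < b p}, 8 * P s p.1 := by
        refine Summable.tsum_le_tsum (fun p => ?_) (sum_g.subtype _)
          ((sumP.subtype _).mul_left 8)
        refine mul_le_mul_of_nonneg_right ?_ (hPnn s p.1)
        have h1 := habs p.1
        have h2 := abs_le.mp h1
        linarith [abs_nonneg (b p.1 - a p.1)]
      refine hTle.trans ?_
      rw [tsum_mul_left]
      have : ∑' p : {p : Nat.Primes | a p < b p}, P s p.1 = T s := rfl
      rw [this]
    -- combine everything
    have ineq1 : 2 * S s - (C3 + C4 + 2 * C5) ≤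
        4 * ∑' p : Nat.Primes, |b p - a p| * P s p := by
      have hb3 := abs_le.mp b3'
      have hb4 := abs_le.mp b4'
      have hb5 := abs_le.mp b5'
      linarith [eA, eB, hb3.1, hb4.1, hb5.2]
    have ineq2 : (2 * S s - (C3 + C4 + 2 * C5)) / 4 - C1 - C2 ≤ 8 * T s := by
      have hb1 := abs_le.mp b1'
      have hb2 := abs_le.mp b2'
      linarith [eC, eD, ineq1, hb1.2, hb2.1]
    rw [hK]
    linarith [ineq2]
  -- positivity of S and T, boundedness of the ratio
  have hSpos : ∀ᶠ s in 𝓝[>] (1 : ℝ), 0 < S s := by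
    filter_upwards [self_mem_nhdsWithin] with s hs1
    have hs : (1 : ℝ) < s := hs1
    exact Summable.tsum_pos (summable_P hs) (hPnn s) ⟨2, Nat.prime_two⟩
      (Real.rpow_pos_of_pos (by norm_num) _)
  have hTnn : ∀ᶠ s in 𝓝[>] (1 : ℝ), 0 ≤ T s := by
    filter_upwards with s
    exact tsum_nonneg (fun p => hPnn s p.1)
  have hTleS : ∀ᶠ s in 𝓝[>] (1 : ℝ), T s ≤ S s := by
    filter_upwards [self_mem_nhdsWithin] with s hs1
    have hs : (1 : ℝ) < s := hs1
    have : T s = ∑' p : Nat.Primes, Set.indicator {p : Nat.Primes | a p < b p} (P s) p := by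
      rw [hT]; exact tsum_subtype {p : Nat.Primes | a p < b p} (P s)
    rw [this]
    refine Summable.tsum_le_tsum (fun p => ?_) ?_ (summable_P hs)
    · exact Set.indicator_le_self' (fun p _ => hPnn s p) p
    · exact (summable_P hs).indicator _
  -- the comparison function tends to 1/16
  have hlim : Tendsto (fun s => 1 / 16 - K / S s) (𝓝[>] (1 : ℝ)) (𝓝 (1 / 16 : ℝ)) := by
    have h0 : Tendsto (fun s => K / S s) (𝓝[>] (1 : ℝ)) (𝓝 0) :=
      Filter.Tendsto.div_atTop tendsto_const_nhds tendsto_S_atTop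
    have := (tendsto_const_nhds (x := (1 / 16 : ℝ)) (f := 𝓝[>] (1 : ℝ))).sub h0
    simpa using this
  -- eventual lower bound on the ratio
  have hratio : ∀ᶠ s in 𝓝[>] (1 : ℝ), 1 / 16 - K / S s ≤ T s / S s := by
    filter_upwards [key, hSpos] with s hkey hpos
    have hrw : 1 / 16 - K / S s = (S s / 16 - K) / S s := by
      field_simp
    rw [hrw]
    gcongr
  calc (1 : ℝ) / 16 = liminf (fun s => 1 / 16 - K / S s) (𝓝[>] (1 : ℝ)) :=
        (hlim.liminf_eq).symm
    _ ≤ liminf (fun s => T s / S s) (𝓝[>] (1 : ℝ)) := by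
        refine liminf_le_liminf hratio hlim.isBoundedUnder_ge ?_
        refine Filter.isCoboundedUnder_ge_of_eventually_le _ (x := 1) ?_
        filter_upwards [hSpos, hTleS] with s hpos hle
        exact div_le_one_of_le₀ hle hpos.le
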